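/- Let a > 0 and N > 0 satisfy 27·a·N² < 2. Let γ : [0,T] → ℝ be continuous and nonnegative, with γ(0) ≤ N, and suppose a·γ(t)³ − γ(t) + N ≥ 0 for all t ∈ [0,T]. Then γ(t) < 3N for all t ∈ [0,T]. -/
import Mathlib

open Set

/-- Continuity/bootstrap argument of Section 9: if `27·a·N² < 2`, `γ` is continuous,
nonnegative, `γ 0 ≤ N`, and `a·γ³ − γ + N ≥ 0` on `[0,T]`, then `γ < 3N` on `[0,T]`. -/
theorem stmt_2
    (a N T : ℝ) (ha : 0 < a) (hN : 0 < N) (hkey : 27 * a * N ^ 2 < 2)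
    (γ : ℝ → ℝ)
    (hcont : ContinuousOn γ (Icc (0 : ℝ) T))
    (hnonneg : ∀ t ∈ Icc (0 : ℝ) T, 0 ≤ γ t)
    (h0 : γ 0 ≤ N)
    (hineq : ∀ t ∈ Icc (0 : ℝ) T, 0 ≤ a * γ t ^ 3 - γ t + N) :
    ∀ t ∈ Icc (0 : ℝ) T, γ t < 3 * N := by
  intro t ht
  by_contra hge
  push_neg at hge
  have hsub : Icc (0 : ℝ) t ⊆ Icc (0 : ℝ) T := Icc_subset_Icc le_rfl ht.2
  have hiv := intermediate_value_Icc ht.1 (hcont.mono hsub)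
  have hmem : (3 * N) ∈ Icc (γ 0) (γ t) := ⟨by linarith, hge⟩
  obtain ⟨s, hs, hgs⟩ := hiv hmem
  have hs' := hsub hs
  have := hineq s hs'
  rw [hgs] at this
  nlinarith [hN.le, mul_pos ha hN]
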